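/- There is an absolute constant c > 0 such that for every n ≥ 1 and N = 2ⁿ, there exists a 2D SLP of size at most c·n deriving the 2D string ShiftBin_N. -/

import Mathlib

/-!
## Two-dimensional strings.
A 2D string over alphabet `A` of size `h × w` is represented canonically:
`f i j` is `some` of the character in (0-indexed) row `i`, column `j` when
`i < h` and `j < w`, and `none` outside of the rectangle.  All operations
below produce such canonical representations, so equality of 2D strings
built from them coincides with equality of the dimensions and of all entries.
-/
structure Str2 (A : Type) where
  h : ℕ
  w : ℕ
  f : ℕ → ℕ → Option A

namespace Str2

variable {A : Type}

/-- Canonical constructor: pads with `none` outside of the `h × w` rectangle. -/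
def mk' (h w : ℕ) (g : ℕ → ℕ → Option A) : Str2 A :=
  ⟨h, w, fun i j => if i < h ∧ j < w then g i j else none⟩

/-- The empty 2D string. -/
def empty : Str2 A := ⟨0, 0, fun _ _ => none⟩

/-- The `1 × 1` 2D string consisting of a single character. -/
def single (a : A) : Str2 A := mk' 1 1 fun _ _ => some a

/-- Horizontal concatenation `S ⊞ T` (meaningful when the heights agree). -/
def hcat (S T : Str2 A) : Str2 A :=
  mk' S.h (S.w + T.w) fun i j => if j < S.w then S.f i j else T.f i (j - S.w)

/-- Vertical concatenation `S ⊟ T` (meaningful when the widths agree). -/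
def vcat (S T : Str2 A) : Str2 A :=
  mk' (S.h + T.h) S.w fun i j => if i < S.h then S.f i j else T.f (i - S.h) j

/-- Horizontal concatenation `S₁ ⊞ S₂ ⊞ ⋯ ⊞ S_k` of a list of 2D strings. -/
def hcatList : List (Str2 A) → Str2 A
  | [] => empty
  | S :: rest => rest.foldl hcat S

/-- Vertical concatenation `S₁ ⊟ S₂ ⊟ ⋯ ⊟ S_k` of a list of 2D strings. -/
def vcatList : List (Str2 A) → Str2 A
  | [] => empty
  | S :: rest => rest.foldl vcat S

/-- The transpose. -/
def transpose (S : Str2 A) : Str2 A := mk' S.w S.h fun i j => S.f j i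

/-- The `i`-th row (0-indexed) of `S`, as a `1 × w` 2D string. -/
def rowStr (S : Str2 A) (i : ℕ) : Str2 A := mk' 1 S.w fun _ j => S.f i j

/-- The `j`-th column (0-indexed) of `S`, read top to bottom, as a `1 × h` 2D string. -/
def colStr (S : Str2 A) (j : ℕ) : Str2 A := mk' 1 S.h fun _ i => S.f i j

/-- A height-one 2D string, viewed as an ordinary (1D) string, i.e. a list. -/
def toList (S : Str2 A) : List A := (List.range S.w).filterMap fun j => S.f 0 j

/-- An ordinary (1D) string viewed as a height-one 2D string. -/
def ofList (l : List A) : Str2 A := mk' 1 l.length fun _ j => l[j]?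

/-- The concatenation of all rows of `S` from top to bottom,
as a height-one 2D string of width `h * w`. -/
def rowsConcat (S : Str2 A) : Str2 A :=
  mk' 1 (S.h * S.w) fun _ j => S.f (j / S.w) (j % S.w)

end Str2

/-- The right-hand side of a production of a 2D SLP: a single character,
a horizontal concatenation of two nonterminals, or a vertical concatenation
of two nonterminals. -/
inductive Rhs2 (A V : Type) where
  | chr : A → Rhs2 A V
  | horiz : V → V → Rhs2 A V
  | vert : V → V → Rhs2 A V

/-- A two-dimensional straight-line program over the alphabet `A`:
a finite set `V` of nonterminals, a starting nonterminal, and a production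
map `rhs`.  Acyclicity of the relation "appears in the right-hand side of"
is witnessed by the function `rank`, which strictly decreases from the
left-hand side of each production to the nonterminals on its right-hand side. -/
structure SLP2 (A : Type) where
  V : Type
  fintypeV : Fintype V
  start : V
  rhs : V → Rhs2 A V
  rank : V → ℕ
  rank_horiz : ∀ {X Y Z}, rhs X = Rhs2.horiz Y Z → rank Y < rank X ∧ rank Z < rank X
  rank_vert : ∀ {X Y Z}, rhs X = Rhs2.vert Y Z → rank Y < rank X ∧ rank Z < rank X

namespace SLP2

variable {A : Type}

/-- Fuel-based evaluation of expansions (with enough fuel it computes the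
unique expansion of a nonterminal). -/
def expAux (G : SLP2 A) : ℕ → G.V → Str2 A
  | 0, _ => Str2.empty
  | n + 1, X =>
    match G.rhs X with
    | .chr a => Str2.single a
    | .horiz Y Z => (G.expAux n Y).hcat (G.expAux n Z)
    | .vert Y Z => (G.expAux n Y).vcat (G.expAux n Z)

/-- The (unique) expansion of a nonterminal `X`: since `rank` strictly
decreases along productions, fuel `rank X + 1` always suffices. -/
def expNT (G : SLP2 A) (X : G.V) : Str2 A := G.expAux (G.rank X + 1) X

/-- The 2D string derived by the SLP. -/
def exp (G : SLP2 A) : Str2 A := G.expNT G.start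

/-- Fuel-based computation of the depth of the derivation tree below a
nonterminal (a node labeled by a production `chr σ` has a single leaf child). -/
def depthAux (G : SLP2 A) : ℕ → G.V → ℕ
  | 0, _ => 0
  | n + 1, X =>
    match G.rhs X with
    | .chr _ => 1
    | .horiz Y Z => 1 + max (G.depthAux n Y) (G.depthAux n Z)
    | .vert Y Z => 1 + max (G.depthAux n Y) (G.depthAux n Z)

/-- The depth of the derivation tree below nonterminal `X`. -/
def depthNT (G : SLP2 A) (X : G.V) : ℕ := G.depthAux (G.rank X + 1) X

/-- The depth of the SLP: the depth of its derivation tree. -/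
def depth (G : SLP2 A) : ℕ := G.depthNT G.start

/-- The size of the SLP: the total number of symbols on the right-hand
sides of all productions. -/
def size (G : SLP2 A) : ℕ :=
  letI := G.fintypeV
  ∑ X : G.V, (match G.rhs X with
    | .chr _ => 1
    | .horiz _ _ => 2
    | .vert _ _ => 2)

/-- The number of nonterminals of the SLP. -/
def numNT (G : SLP2 A) : ℕ :=
  letI := G.fintypeV
  Fintype.card G.V

/-- Well-formedness: dimensions match in every production, i.e. in a
horizontal concatenation both arguments have equal heights, and in a
vertical concatenation both arguments have equal widths. -/
def WF (G : SLP2 A) : Prop :=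
  ∀ X : G.V,
    match G.rhs X with
    | .chr _ => True
    | .horiz Y Z => (G.expNT Y).h = (G.expNT Z).h
    | .vert Y Z => (G.expNT Y).w = (G.expNT Z).w

/-- A 1D SLP: a 2D SLP that uses only horizontal concatenations and derives
a string of height `1`. -/
def OneDim (G : SLP2 A) : Prop :=
  (∀ X Y Z, G.rhs X ≠ Rhs2.vert Y Z) ∧ (G.exp).h = 1

end SLP2
/-- The alphabet `{0, 1, $}`. -/
inductive Alpha3 : Type where
  | zero : Alpha3
  | one : Alpha3
  | dollar : Alpha3
deriving DecidableEq

instance : Fintype Alpha3 where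
  elems := {Alpha3.zero, Alpha3.one, Alpha3.dollar}
  complete := by intro x; cases x <;> simp

/-- For `N = 2^n`, the 2D string `Bin_N` of size `N × (n+2)` whose `i`-th row
(1-indexed) is the `n`-bit binary representation (most significant bit first)
of `i - 1`, surrounded by one `$` symbol on each side. -/
def binStr (n : ℕ) : Str2 Alpha3 :=
  Str2.mk' (2 ^ n) (n + 2) fun i j =>
    some (if j = 0 ∨ j = n + 1 then Alpha3.dollar
      else if Nat.testBit i (n - j) then Alpha3.one else Alpha3.zero)

/-- For `N = 2^n`, the 2D string `ShiftBin_N` of size `2N × N(n+2)`: for every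
`i ∈ [0..N-1]`, the columns `i(n+2)+1` through `(i+1)(n+2)` (1-indexed) consist
of `i` rows filled with `0`'s, followed by a copy of `Bin_N`, followed by
`N - i` rows filled with `0`'s. -/
def shiftBinStr (n : ℕ) : Str2 Alpha3 :=
  Str2.mk' (2 * 2 ^ n) (2 ^ n * (n + 2)) fun r c =>
    let i := c / (n + 2)
    if i ≤ r ∧ r < i + 2 ^ n then (binStr n).f (r - i) (c % (n + 2)) else some Alpha3.zero

/-- A binary string `b`, surrounded by one `$` symbol on each side, as a string
over an alphabet with distinguished symbols `z` (zero), `o` (one), `d` (dollar). -/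
def dollarWrap {A : Type} (z o d : A) (b : List Bool) : List A :=
  d :: (b.map fun x => if x then o else z) ++ [d]

/-- The exponent of `M'`: the largest `m` such that `M' = 2^m` satisfies
`M' * (log₂ M' + 2) ≤ M / 2`, i.e. `2 * 2^m * (m + 2) ≤ M`. -/
def mExp (M : ℕ) : ℕ := Nat.findGreatest (fun m => 2 * 2 ^ m * (m + 2) ≤ M) M

/-- The 2D string `C_{N,M}` of size `N × M`: with `M'` the largest power of two
such that `M' * (log₂ M' + 2) ≤ M / 2` and `B = ShiftBin_{M'}` (of size
`2M' × M'(log₂ M' + 2)`), it consists of a left block of `⌊N/(2M')⌋` vertically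
concatenated copies of `B` padded below with `0`'s to height `N`; to its right,
a right block of `M'` rows of `0`'s followed by `⌊(N-M')/(2M')⌋` vertically
concatenated copies of `B`, padded below with `0`'s to height `N`; and columns
of `0`'s padding the total width to `M`. -/
def gadgetC (N M : ℕ) : Str2 Alpha3 :=
  let n := mExp M
  let M' := 2 ^ n
  let W := M' * (n + 2)
  Str2.mk' N M fun r c =>
    if c < W then
      (if r < 2 * M' * (N / (2 * M')) then (shiftBinStr n).f (r % (2 * M')) c
       else some Alpha3.zero)
    else if c < 2 * W then
      (if M' ≤ r ∧ r < M' + 2 * M' * ((N - M') / (2 * M'))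
       then (shiftBinStr n).f ((r - M') % (2 * M')) (c - W)
       else some Alpha3.zero)
    else some Alpha3.zero
namespace Str2

variable {A : Type}

@[simp] lemma mk'_h (h w : ℕ) (g : ℕ → ℕ → Option A) : (mk' h w g).h = h := rfl
@[simp] lemma mk'_w (h w : ℕ) (g : ℕ → ℕ → Option A) : (mk' h w g).w = w := rfl

lemma mk'_f (h w : ℕ) (g : ℕ → ℕ → Option A) (i j : ℕ) :
    (mk' h w g).f i j = if i < h ∧ j < w then g i j else none := rfl

lemma mk'_ext {h1 h2 w1 w2 : ℕ} {g1 g2 : ℕ → ℕ → Option A} (hh : h1 = h2) (hw : w1 = w2)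
    (H : ∀ i j, i < h1 → j < w1 → g1 i j = g2 i j) : mk' h1 w1 g1 = mk' h2 w2 g2 := by
  subst hh; subst hw
  unfold mk'
  congr 1
  funext i j
  split_ifs with hc
  · exact H i j hc.1 hc.2
  · rfl

lemma hcat_mk'0 {h1 w1 w2 : ℕ} (g1 g2 : ℕ → ℕ → Option A) :
    (mk' h1 w1 g1).hcat (mk' h1 w2 g2) =
      mk' h1 (w1 + w2) (fun i j => if j < w1 then g1 i j else g2 i (j - w1)) := by
  show mk' h1 (w1 + w2) _ = _
  apply mk'_ext rfl rfl
  intro i j hi hj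
  simp only [mk'_f, mk'_h, mk'_w]
  by_cases hc : j < w1 <;> simp [hc, hi] <;> omega

lemma vcat_mk'0 {h1 h2 w1 : ℕ} (g1 g2 : ℕ → ℕ → Option A) :
    (mk' h1 w1 g1).vcat (mk' h2 w1 g2) =
      mk' (h1 + h2) w1 (fun i j => if i < h1 then g1 i j else g2 (i - h1) j) := by
  show mk' (h1 + h2) w1 _ = _
  apply mk'_ext rfl rfl
  intro i j hi hj
  simp only [mk'_f, mk'_h, mk'_w]
  by_cases hc : i < h1 <;> simp [hc, hj] <;> omega

lemma hcat_mk' {h1 h2 w1 w2 : ℕ} (hh : h2 = h1) (g1 g2 : ℕ → ℕ → Option A) :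
    (mk' h1 w1 g1).hcat (mk' h2 w2 g2) =
      mk' h1 (w1 + w2) (fun i j => if j < w1 then g1 i j else g2 i (j - w1)) := by
  subst hh; exact hcat_mk'0 g1 g2

lemma vcat_mk' {h1 h2 w1 w2 : ℕ} (hw : w2 = w1) (g1 g2 : ℕ → ℕ → Option A) :
    (mk' h1 w1 g1).vcat (mk' h2 w2 g2) =
      mk' (h1 + h2) w1 (fun i j => if i < h1 then g1 i j else g2 (i - h1) j) := by
  subst hw; exact vcat_mk'0 g1 g2

lemma single_eq (a : A) : single a = mk' 1 1 (fun _ _ => some a) := rfl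

end Str2

namespace SLP2

variable {A : Type}

lemma expAux_eq (G : SLP2 A) : ∀ (r : ℕ) (X : G.V), G.rank X ≤ r → ∀ m, G.rank X < m →
    G.expAux m X = G.expNT X := by
  intro r
  induction r with
  | zero =>
      intro X hX m hm
      obtain ⟨m, rfl⟩ : ∃ k, m = k + 1 := ⟨m - 1, by omega⟩
      show G.expAux (m + 1) X = G.expAux (G.rank X + 1) X
      rcases h : G.rhs X with a | ⟨Y, Z⟩ | ⟨Y, Z⟩
      · simp [SLP2.expAux, h]
      · exact absurd ((G.rank_horiz h).1) (by omega)
      · exact absurd ((G.rank_vert h).1) (by omega)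
  | succ r ih =>
      intro X hX m hm
      obtain ⟨m, rfl⟩ : ∃ k, m = k + 1 := ⟨m - 1, by omega⟩
      show G.expAux (m + 1) X = G.expAux (G.rank X + 1) X
      rcases h : G.rhs X with a | ⟨Y, Z⟩ | ⟨Y, Z⟩
      · simp [SLP2.expAux, h]
      · obtain ⟨h1, h2⟩ := G.rank_horiz h
        simp only [SLP2.expAux, h]
        rw [ih Y (by omega) m (by omega), ih Z (by omega) m (by omega),
            ih Y (by omega) (G.rank X) (by omega), ih Z (by omega) (G.rank X) (by omega)]
      · obtain ⟨h1, h2⟩ := G.rank_vert h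
        simp only [SLP2.expAux, h]
        rw [ih Y (by omega) m (by omega), ih Z (by omega) m (by omega),
            ih Y (by omega) (G.rank X) (by omega), ih Z (by omega) (G.rank X) (by omega)]

lemma expNT_chr (G : SLP2 A) {X : G.V} {a : A} (h : G.rhs X = .chr a) :
    G.expNT X = Str2.single a := by
  show G.expAux (G.rank X + 1) X = _
  simp [SLP2.expAux, h]

lemma expNT_horiz (G : SLP2 A) {X Y Z : G.V} (h : G.rhs X = .horiz Y Z) :
    G.expNT X = (G.expNT Y).hcat (G.expNT Z) := by
  obtain ⟨h1, h2⟩ := G.rank_horiz h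
  show G.expAux (G.rank X + 1) X = _
  simp only [SLP2.expAux, h]
  rw [G.expAux_eq (G.rank Y) Y le_rfl (G.rank X) h1,
      G.expAux_eq (G.rank Z) Z le_rfl (G.rank X) h2]

lemma expNT_vert (G : SLP2 A) {X Y Z : G.V} (h : G.rhs X = .vert Y Z) :
    G.expNT X = (G.expNT Y).vcat (G.expNT Z) := by
  obtain ⟨h1, h2⟩ := G.rank_vert h
  show G.expAux (G.rank X + 1) X = _
  simp only [SLP2.expAux, h]
  rw [G.expAux_eq (G.rank Y) Y le_rfl (G.rank X) h1,
      G.expAux_eq (G.rank Z) Z le_rfl (G.rank X) h2]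

end SLP2
/-! ### The grammar for `ShiftBin` -/

inductive GK : Type where
  | zc | oc | dc | zr | cc | pp | qq | rr | rh | vv | aa | bb | bin
deriving DecidableEq

instance : Fintype GK where
  elems := {.zc, .oc, .dc, .zr, .cc, .pp, .qq, .rr, .rh, .vv, .aa, .bb, .bin}
  complete := by intro x; cases x <;> simp

abbrev GVT (n : ℕ) := GK × Fin (n + 2)

def fidx (n m : ℕ) : Fin (n + 2) := ⟨min m (n + 1), by omega⟩

def gRhs (n : ℕ) : GVT n → Rhs2 Alpha3 (GVT n)
  | (.zc, j) => if j.val = 0 then .chr .zero else .vert (.zc, fidx n (j - 1)) (.zc, fidx n (j - 1))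
  | (.oc, j) => if j.val = 0 then .chr .one else .vert (.oc, fidx n (j - 1)) (.oc, fidx n (j - 1))
  | (.dc, j) => if j.val = 0 then .chr .dollar else .vert (.dc, fidx n (j - 1)) (.dc, fidx n (j - 1))
  | (.zr, j) => if j.val = 0 then .chr .zero else .horiz (.zr, fidx n (j - 1)) (.zr, fidx n 0)
  | (.cc, j) => if j.val = 0 then .chr .dollar else .vert (.pp, fidx n (j - 1)) (.qq, fidx n (j - 1))
  | (.pp, j) => .horiz (.zc, j) (.cc, j)
  | (.qq, j) => .horiz (.oc, j) (.cc, j)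
  | (.rr, j) => if j.val = 0 then .horiz (.zr, fidx n n) (.zr, fidx n 0)
      else .vert (.rh, fidx n (j - 1)) (.rh, fidx n (j - 1))
  | (.rh, j) => .horiz (.rr, j) (.rr, j)
  | (.bin, _) => .horiz (.dc, fidx n n) (.cc, fidx n n)
  | (.vv, j) => if j.val = 0 then .vert (.bin, fidx n 0) (.rr, fidx n 0)
      else .horiz (.aa, fidx n (j - 1)) (.bb, fidx n (j - 1))
  | (.aa, j) => .vert (.vv, j) (.rr, j)
  | (.bb, j) => .vert (.rr, j) (.vv, j)

def gRank (n : ℕ) : GVT n → ℕ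
  | (.zc, j) => 2 * j.val
  | (.oc, j) => 2 * j.val
  | (.dc, j) => 2 * j.val
  | (.zr, j) => j.val
  | (.cc, j) => 3 * j.val + n + 3
  | (.pp, j) => 3 * j.val + n + 4
  | (.qq, j) => 3 * j.val + n + 4
  | (.rr, j) => 3 * j.val + n + 3
  | (.rh, j) => 3 * j.val + n + 4
  | (.bin, _) => 4 * n + 4
  | (.vv, j) => 3 * j.val + 4 * n + 5
  | (.aa, j) => 3 * j.val + 4 * n + 6
  | (.bb, j) => 3 * j.val + 4 * n + 6

def shiftG (n : ℕ) : SLP2 Alpha3 where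
  V := GVT n
  fintypeV := inferInstance
  start := (.vv, fidx n n)
  rhs := gRhs n
  rank := gRank n
  rank_horiz := by
    intro X Y Z h
    obtain ⟨k, j⟩ := X
    have hj : j.val < n + 2 := j.isLt
    cases k <;> simp only [gRhs] at h <;> (try split_ifs at h with h0) <;>
      simp only [Rhs2.horiz.injEq, reduceCtorEq] at h <;>
      obtain ⟨rfl, rfl⟩ := h <;> constructor <;> simp only [gRank, fidx] <;> omega
  rank_vert := by
    intro X Y Z h
    obtain ⟨k, j⟩ := X
    have hj : j.val < n + 2 := j.isLt
    cases k <;> simp only [gRhs] at h <;> (try split_ifs at h with h0) <;>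
      simp only [Rhs2.vert.injEq, reduceCtorEq] at h <;>
      obtain ⟨rfl, rfl⟩ := h <;> constructor <;> simp only [gRank, fidx] <;> omega
/-! ### Values of the nonterminals -/

def binF (n : ℕ) : ℕ → ℕ → Option Alpha3 := fun i j =>
  some (if j = 0 ∨ j = n + 1 then Alpha3.dollar
    else if Nat.testBit i (n - j) then Alpha3.one else Alpha3.zero)

lemma binStr_eq (n : ℕ) : binStr n = Str2.mk' (2 ^ n) (n + 2) (binF n) := rfl

def sfun (n : ℕ) (r c : ℕ) : Option Alpha3 :=
  if c / (n + 2) ≤ r ∧ r < c / (n + 2) + 2 ^ n then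
    (binStr n).f (r - c / (n + 2)) (c % (n + 2))
  else some Alpha3.zero

lemma shiftBin_eq (n : ℕ) :
    shiftBinStr n = Str2.mk' (2 * 2 ^ n) (2 ^ n * (n + 2)) (sfun n) := rfl

def ccF (m : ℕ) : ℕ → ℕ → Option Alpha3 := fun i c =>
  some (if c = m then Alpha3.dollar
    else if Nat.testBit i (m - 1 - c) then Alpha3.one else Alpha3.zero)

def ppF (a : Alpha3) (m : ℕ) : ℕ → ℕ → Option Alpha3 := fun i c =>
  some (if c = 0 then a else if c = m + 1 then Alpha3.dollar
    else if Nat.testBit i (m - c) then Alpha3.one else Alpha3.zero)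

section ExpLemmas

variable (n : ℕ)

lemma exp_col (k : GK) (a : Alpha3)
    (hk : ∀ j : Fin (n + 2), gRhs n (k, j) =
      if j.val = 0 then .chr a
      else .vert (k, fidx n (j.val - 1)) (k, fidx n (j.val - 1))) :
    ∀ (m : ℕ) (j : Fin (n + 2)), j.val = m →
      (shiftG n).expNT (k, j) = Str2.mk' (2 ^ m) 1 (fun _ _ => some a) := by
  intro m
  induction m with
  | zero =>
      intro j hj
      have h : (shiftG n).rhs (k, j) = .chr a := by
        show gRhs n (k, j) = _; rw [hk]; simp [hj]; rfl
      rw [(shiftG n).expNT_chr h, Str2.single_eq]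
      exact Str2.mk'_ext (by norm_num) rfl (fun _ _ _ _ => rfl)
  | succ m ih =>
      intro j hj
      have hm : m + 1 < n + 2 := hj ▸ j.isLt
      have h : (shiftG n).rhs (k, j) = .vert (k, fidx n m) (k, fidx n m) := by
        show gRhs n (k, j) = _; rw [hk]; simp [hj]; rfl
      rw [(shiftG n).expNT_vert h, ih (fidx n m) (by simp [fidx]; omega),
          Str2.vcat_mk' rfl]
      apply Str2.mk'_ext (by have := pow_succ 2 m; omega) rfl
      intro i c hi hc
      split_ifs <;> rfl

lemma exp_zc : ∀ (m : ℕ) (j : Fin (n + 2)), j.val = m →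
    (shiftG n).expNT (.zc, j) = Str2.mk' (2 ^ m) 1 (fun _ _ => some Alpha3.zero) :=
  exp_col n .zc .zero (fun _ => rfl)

lemma exp_oc : ∀ (m : ℕ) (j : Fin (n + 2)), j.val = m →
    (shiftG n).expNT (.oc, j) = Str2.mk' (2 ^ m) 1 (fun _ _ => some Alpha3.one) :=
  exp_col n .oc .one (fun _ => rfl)

lemma exp_dc : ∀ (m : ℕ) (j : Fin (n + 2)), j.val = m →
    (shiftG n).expNT (.dc, j) = Str2.mk' (2 ^ m) 1 (fun _ _ => some Alpha3.dollar) :=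
  exp_col n .dc .dollar (fun _ => rfl)

lemma exp_zr0 (j : Fin (n + 2)) (hj : j.val = 0) :
    (shiftG n).expNT (.zr, j) = Str2.mk' 1 1 (fun _ _ => some Alpha3.zero) := by
  have h : (shiftG n).rhs (.zr, j) = .chr .zero := by
    show gRhs n (.zr, j) = _; simp [gRhs, hj]; rfl
  rw [(shiftG n).expNT_chr h, Str2.single_eq]

lemma exp_zr : ∀ (m : ℕ) (j : Fin (n + 2)), j.val = m →
    (shiftG n).expNT (.zr, j) = Str2.mk' 1 (m + 1) (fun _ _ => some Alpha3.zero) := by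
  intro m
  induction m with
  | zero => exact exp_zr0 n
  | succ m ih =>
      intro j hj
      have hm : m + 1 < n + 2 := hj ▸ j.isLt
      have h : (shiftG n).rhs (.zr, j) = .horiz (.zr, fidx n m) (.zr, fidx n 0) := by
        show gRhs n (.zr, j) = _; simp [gRhs, hj]; rfl
      rw [(shiftG n).expNT_horiz h, ih (fidx n m) (by simp [fidx]; omega),
          exp_zr0 n (fidx n 0) (by simp [fidx]), Str2.hcat_mk' rfl]
      apply Str2.mk'_ext rfl rfl
      intro i c hi hc
      split_ifs <;> rfl

lemma exp_pp (m : ℕ) (j : Fin (n + 2)) (hj : j.val = m)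
    (hcc : (shiftG n).expNT (.cc, j) = Str2.mk' (2 ^ m) (m + 1) (ccF m)) :
    (shiftG n).expNT (.pp, j) = Str2.mk' (2 ^ m) (m + 2) (ppF .zero m) := by
  have h : (shiftG n).rhs (.pp, j) = .horiz (.zc, j) (.cc, j) := rfl
  rw [(shiftG n).expNT_horiz h, exp_zc n m j hj, hcc, Str2.hcat_mk' rfl]
  apply Str2.mk'_ext rfl (by omega)
  intro i c hi hc
  unfold ccF ppF
  rcases Nat.eq_zero_or_pos c with rfl | hcpos
  · simp
  · have h1 : ¬ c < 1 := by omega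
    have h2 : m - 1 - (c - 1) = m - c := by omega
    simp only [h1, if_false, h2, if_neg (by omega : ¬ c = 0)]
    by_cases hce : c = m + 1
    · rw [if_pos (by omega : c - 1 = m), if_pos hce]
    · rw [if_neg (by omega : ¬ c - 1 = m), if_neg hce]

lemma exp_qq (m : ℕ) (j : Fin (n + 2)) (hj : j.val = m)
    (hcc : (shiftG n).expNT (.cc, j) = Str2.mk' (2 ^ m) (m + 1) (ccF m)) :
    (shiftG n).expNT (.qq, j) = Str2.mk' (2 ^ m) (m + 2) (ppF .one m) := by
  have h : (shiftG n).rhs (.qq, j) = .horiz (.oc, j) (.cc, j) := rfl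
  rw [(shiftG n).expNT_horiz h, exp_oc n m j hj, hcc, Str2.hcat_mk' rfl]
  apply Str2.mk'_ext rfl (by omega)
  intro i c hi hc
  unfold ccF ppF
  rcases Nat.eq_zero_or_pos c with rfl | hcpos
  · simp
  · have h1 : ¬ c < 1 := by omega
    have h2 : m - 1 - (c - 1) = m - c := by omega
    simp only [h1, if_false, h2, if_neg (by omega : ¬ c = 0)]
    by_cases hce : c = m + 1
    · rw [if_pos (by omega : c - 1 = m), if_pos hce]
    · rw [if_neg (by omega : ¬ c - 1 = m), if_neg hce]

lemma exp_cc : ∀ (m : ℕ) (j : Fin (n + 2)), j.val = m →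
    (shiftG n).expNT (.cc, j) = Str2.mk' (2 ^ m) (m + 1) (ccF m) := by
  intro m
  induction m with
  | zero =>
      intro j hj
      have h : (shiftG n).rhs (.cc, j) = .chr .dollar := by
        show gRhs n (.cc, j) = _; simp [gRhs, hj]; rfl
      rw [(shiftG n).expNT_chr h, Str2.single_eq]
      apply Str2.mk'_ext (by norm_num) rfl
      intro i c hi hc
      have : c = 0 := by omega
      subst this
      simp [ccF]
  | succ m ih =>
      intro j hj
      have hm : m + 1 < n + 2 := hj ▸ j.isLt
      have hfm : (fidx n m).val = m := by simp [fidx]; omega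
      have h : (shiftG n).rhs (.cc, j) = .vert (.pp, fidx n m) (.qq, fidx n m) := by
        show gRhs n (.cc, j) = _; simp [gRhs, hj]; rfl
      rw [(shiftG n).expNT_vert h,
          exp_pp n m (fidx n m) hfm (ih (fidx n m) hfm),
          exp_qq n m (fidx n m) hfm (ih (fidx n m) hfm),
          Str2.vcat_mk' rfl]
      apply Str2.mk'_ext (by have := pow_succ 2 m; omega) (by omega)
      intro i c hi hc
      unfold ppF ccF
      simp only [Nat.add_sub_cancel]
      by_cases hI : i < 2 ^ m
      · simp only [if_pos hI]
        rcases Nat.eq_zero_or_pos c with rfl | hcpos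
        · have hb : Nat.testBit i m = false := Nat.testBit_lt_two_pow hI
          simp [hb, if_neg (by omega : ¬ (0:ℕ) = m + 1)]
        · by_cases hce : c = m + 1
          · rw [if_neg (by omega : ¬ c = 0), if_pos hce]
          · rw [if_neg (by omega : ¬ c = 0), if_neg hce]
      · simp only [if_neg hI]
        obtain ⟨x, rfl⟩ : ∃ x, i = 2 ^ m + x := ⟨i - 2 ^ m, by omega⟩
        have hx : x < 2 ^ m := by omega
        simp only [Nat.add_sub_cancel_left]
        rcases Nat.eq_zero_or_pos c with rfl | hcpos
        · have hb : Nat.testBit (2 ^ m + x) m = true := by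
            rw [Nat.testBit_two_pow_add_eq, Nat.testBit_lt_two_pow hx]; rfl
          simp [hb, if_neg (by omega : ¬ (0:ℕ) = m + 1)]
        · by_cases hce : c = m + 1
          · rw [if_neg (by omega : ¬ c = 0), if_pos hce, if_pos hce]
          · rw [if_neg (by omega : ¬ c = 0), if_neg hce,
                Nat.testBit_two_pow_add_gt (by omega : m - c < m), if_neg hce]

lemma exp_bin (j : Fin (n + 2)) :
    (shiftG n).expNT (.bin, j) = binStr n := by
  have h : (shiftG n).rhs (.bin, j) = .horiz (.dc, fidx n n) (.cc, fidx n n) := rfl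
  have hfn : (fidx n n).val = n := by simp [fidx]
  rw [(shiftG n).expNT_horiz h, exp_dc n n (fidx n n) hfn, exp_cc n n (fidx n n) hfn,
      Str2.hcat_mk' rfl, binStr_eq]
  apply Str2.mk'_ext rfl (by omega)
  intro i c hi hc
  unfold ccF binF
  rcases Nat.eq_zero_or_pos c with rfl | hcpos
  · simp
  · have h1 : ¬ c < 1 := by omega
    have h2 : n - 1 - (c - 1) = n - c := by omega
    simp only [h1, if_false, h2]
    by_cases hce : c = n + 1
    · rw [if_pos (by omega : c - 1 = n), if_pos (by omega : c = 0 ∨ c = n + 1)]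
    · rw [if_neg (by omega : ¬ c - 1 = n), if_neg (by omega : ¬ (c = 0 ∨ c = n + 1))]

end ExpLemmas
section ExpLemmas2

variable (n : ℕ)

lemma exp_rr0 (j : Fin (n + 2)) (hj : j.val = 0) :
    (shiftG n).expNT (.rr, j) =
      Str2.mk' (2 ^ 0) (2 ^ 0 * (n + 2)) (fun _ _ => some Alpha3.zero) := by
  have h : (shiftG n).rhs (.rr, j) = .horiz (.zr, fidx n n) (.zr, fidx n 0) := by
    show gRhs n (.rr, j) = _; simp [gRhs, hj]; rfl
  rw [(shiftG n).expNT_horiz h, exp_zr n n (fidx n n) (by simp [fidx]),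
      exp_zr n 0 (fidx n 0) (by simp [fidx]), Str2.hcat_mk' rfl]
  apply Str2.mk'_ext (by norm_num) (by norm_num)
  intro i c hi hc
  split_ifs <;> rfl

lemma exp_rh (m : ℕ) (j : Fin (n + 2)) (hj : j.val = m)
    (hrr : (shiftG n).expNT (.rr, j) =
      Str2.mk' (2 ^ m) (2 ^ m * (n + 2)) (fun _ _ => some Alpha3.zero)) :
    (shiftG n).expNT (.rh, j) =
      Str2.mk' (2 ^ m) (2 ^ m * (n + 2) + 2 ^ m * (n + 2)) (fun _ _ => some Alpha3.zero) := by
  have h : (shiftG n).rhs (.rh, j) = .horiz (.rr, j) (.rr, j) := rfl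
  rw [(shiftG n).expNT_horiz h, hrr, Str2.hcat_mk' rfl]
  apply Str2.mk'_ext rfl rfl
  intro i c hi hc
  split_ifs <;> rfl

lemma exp_rr : ∀ (m : ℕ) (j : Fin (n + 2)), j.val = m →
    (shiftG n).expNT (.rr, j) =
      Str2.mk' (2 ^ m) (2 ^ m * (n + 2)) (fun _ _ => some Alpha3.zero) := by
  intro m
  induction m with
  | zero => exact exp_rr0 n
  | succ m ih =>
      intro j hj
      have hm : m + 1 < n + 2 := hj ▸ j.isLt
      have hfm : (fidx n m).val = m := by simp [fidx]; omega
      have h : (shiftG n).rhs (.rr, j) = .vert (.rh, fidx n m) (.rh, fidx n m) := by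
        show gRhs n (.rr, j) = _; simp [gRhs, hj]; rfl
      rw [(shiftG n).expNT_vert h, exp_rh n m (fidx n m) hfm (ih (fidx n m) hfm),
          Str2.vcat_mk' rfl]
      apply Str2.mk'_ext (by have := pow_succ 2 m; omega)
        (by rw [pow_succ]; ring)
      intro i c hi hc
      split_ifs <;> rfl

lemma exp_vv0 (j : Fin (n + 2)) (hj : j.val = 0) :
    (shiftG n).expNT (.vv, j) =
      Str2.mk' (2 ^ n + 2 ^ 0) (2 ^ 0 * (n + 2)) (sfun n) := by
  have h : (shiftG n).rhs (.vv, j) = .vert (.bin, fidx n 0) (.rr, fidx n 0) := by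
    show gRhs n (.vv, j) = _; simp [gRhs, hj]; rfl
  rw [(shiftG n).expNT_vert h, exp_bin n (fidx n 0), binStr_eq,
      exp_rr n 0 (fidx n 0) (by simp [fidx]),
      Str2.vcat_mk' (by norm_num)]
  apply Str2.mk'_ext rfl (by norm_num)
  intro r c hr hc
  have hd : c / (n + 2) = 0 := Nat.div_eq_of_lt (by omega)
  have hm : c % (n + 2) = c := Nat.mod_eq_of_lt (by omega)
  unfold sfun
  rw [hd, hm]
  by_cases hR : r < 2 ^ n
  · rw [if_pos hR, if_pos (by omega : 0 ≤ r ∧ r < 0 + 2 ^ n), Nat.sub_zero,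
        binStr_eq, Str2.mk'_f, if_pos ⟨hR, by omega⟩]
  · rw [if_neg hR, if_neg (by omega : ¬ (0 ≤ r ∧ r < 0 + 2 ^ n))]

lemma exp_aa (m : ℕ) (j : Fin (n + 2)) (hj : j.val = m)
    (hvv : (shiftG n).expNT (.vv, j) =
      Str2.mk' (2 ^ n + 2 ^ m) (2 ^ m * (n + 2)) (sfun n)) :
    (shiftG n).expNT (.aa, j) =
      Str2.mk' (2 ^ n + (2 ^ m + 2 ^ m)) (2 ^ m * (n + 2)) (sfun n) := by
  have h : (shiftG n).rhs (.aa, j) = .vert (.vv, j) (.rr, j) := rfl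
  rw [(shiftG n).expNT_vert h, hvv, exp_rr n m j hj, Str2.vcat_mk' rfl]
  apply Str2.mk'_ext (by omega) rfl
  intro r c hr hc
  by_cases hR : r < 2 ^ n + 2 ^ m
  · rw [if_pos hR]
  · rw [if_neg hR]
    have hi : c / (n + 2) < 2 ^ m := (Nat.div_lt_iff_lt_mul (by omega)).2 hc
    unfold sfun
    rw [if_neg (by omega)]

lemma exp_bb (m : ℕ) (j : Fin (n + 2)) (hj : j.val = m)
    (hvv : (shiftG n).expNT (.vv, j) =
      Str2.mk' (2 ^ n + 2 ^ m) (2 ^ m * (n + 2)) (sfun n)) :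
    (shiftG n).expNT (.bb, j) =
      Str2.mk' (2 ^ n + (2 ^ m + 2 ^ m)) (2 ^ m * (n + 2))
        (fun r c => if r < 2 ^ m then some Alpha3.zero else sfun n (r - 2 ^ m) c) := by
  have h : (shiftG n).rhs (.bb, j) = .vert (.rr, j) (.vv, j) := rfl
  rw [(shiftG n).expNT_vert h, hvv, exp_rr n m j hj, Str2.vcat_mk' rfl]
  apply Str2.mk'_ext (by omega) rfl
  intro r c hr hc
  split_ifs <;> rfl

lemma exp_vv : ∀ (m : ℕ) (j : Fin (n + 2)), j.val = m →
    (shiftG n).expNT (.vv, j) =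
      Str2.mk' (2 ^ n + 2 ^ m) (2 ^ m * (n + 2)) (sfun n) := by
  intro m
  induction m with
  | zero => exact exp_vv0 n
  | succ m ih =>
      intro j hj
      have hm : m + 1 < n + 2 := hj ▸ j.isLt
      have hfm : (fidx n m).val = m := by simp [fidx]; omega
      have h : (shiftG n).rhs (.vv, j) = .horiz (.aa, fidx n m) (.bb, fidx n m) := by
        show gRhs n (.vv, j) = _; simp [gRhs, hj]; rfl
      rw [(shiftG n).expNT_horiz h,
          exp_aa n m (fidx n m) hfm (ih (fidx n m) hfm),
          exp_bb n m (fidx n m) hfm (ih (fidx n m) hfm),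
          Str2.hcat_mk' rfl]
      apply Str2.mk'_ext (by have := pow_succ 2 m; omega) (by rw [pow_succ]; ring)
      intro r c hr hc
      by_cases hC : c < 2 ^ m * (n + 2)
      · rw [if_pos hC]
      · rw [if_neg hC]
        obtain ⟨c', rfl⟩ : ∃ c', c = c' + 2 ^ m * (n + 2) :=
          ⟨c - 2 ^ m * (n + 2), by omega⟩
        have hc' : c' < 2 ^ m * (n + 2) := by omega
        have hdiv : (c' + 2 ^ m * (n + 2)) / (n + 2) = c' / (n + 2) + 2 ^ m :=
          Nat.add_mul_div_right c' (2 ^ m) (by omega)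
        have hmod : (c' + 2 ^ m * (n + 2)) % (n + 2) = c' % (n + 2) :=
          Nat.add_mul_mod_self_right c' (2 ^ m) (n + 2)
        have hi' : c' / (n + 2) < 2 ^ m := (Nat.div_lt_iff_lt_mul (by omega)).2 hc'
        have hd0 : 0 < c' / (n + 2) + 1 := Nat.succ_pos _
        simp only [Nat.add_sub_cancel]
        by_cases hR : r < 2 ^ m
        · rw [if_pos hR]
          unfold sfun
          rw [hdiv, if_neg (by omega)]
        · rw [if_neg hR]
          unfold sfun
          rw [hdiv, hmod]
          have harg : r - 2 ^ m - c' / (n + 2) = r - (c' / (n + 2) + 2 ^ m) := by omega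
          rw [harg]
          split_ifs <;> first | rfl | (exfalso; omega)

lemma exp_shiftG : (shiftG n).exp = shiftBinStr n := by
  show (shiftG n).expNT (.vv, fidx n n) = _
  rw [exp_vv n n (fidx n n) (by simp [fidx]), shiftBin_eq]
  exact Str2.mk'_ext (by omega) rfl (fun _ _ _ _ => rfl)

end ExpLemmas2
lemma SLP2.wf_of {A : Type} (G : SLP2 A)
    (hh : ∀ X Y Z, G.rhs X = .horiz Y Z → (G.expNT Y).h = (G.expNT Z).h)
    (hv : ∀ X Y Z, G.rhs X = .vert Y Z → (G.expNT Y).w = (G.expNT Z).w) : G.WF := by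
  intro X
  rcases hx : G.rhs X with a | ⟨Y, Z⟩ | ⟨Y, Z⟩ <;> simp only [hx]
  · exact hh X Y Z hx
  · exact hv X Y Z hx

lemma wf_shiftG (n : ℕ) : (shiftG n).WF := by
  apply SLP2.wf_of
  · intro X Y Z hYZ
    obtain ⟨k, j⟩ := X
    have hj2 : j.val < n + 2 := j.isLt
    cases k <;> simp only [shiftG, gRhs] at hYZ <;> (try split_ifs at hYZ with h0) <;>
      (try simp only [reduceCtorEq] at hYZ) <;>
      obtain ⟨rfl, rfl⟩ := Rhs2.horiz.inj hYZ <;>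
      first
        | rfl
        | (rw [exp_zr n _ _ rfl, exp_zr n _ _ rfl]; rfl)
        | (rw [exp_zc n _ _ rfl, exp_cc n _ _ rfl]; rfl)
        | (rw [exp_oc n _ _ rfl, exp_cc n _ _ rfl]; rfl)
        | (rw [exp_dc n _ _ rfl, exp_cc n _ _ rfl]; rfl)
        | (rw [exp_aa n _ _ rfl (exp_vv n _ _ rfl), exp_bb n _ _ rfl (exp_vv n _ _ rfl)]; rfl)
  · intro X Y Z hYZ
    obtain ⟨k, j⟩ := X
    have hj2 : j.val < n + 2 := j.isLt
    cases k <;> simp only [shiftG, gRhs] at hYZ <;> (try split_ifs at hYZ with h0) <;>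
      (try simp only [reduceCtorEq] at hYZ) <;>
      obtain ⟨rfl, rfl⟩ := Rhs2.vert.inj hYZ <;>
      first
        | rfl
        | (rw [exp_pp n _ _ rfl (exp_cc n _ _ rfl), exp_qq n _ _ rfl (exp_cc n _ _ rfl)]; rfl)
        | (rw [exp_bin n _, binStr_eq, exp_rr n 0 _ (by simp [fidx])]; norm_num)
        | (rw [exp_vv n _ _ rfl, exp_rr n _ _ rfl]; rfl)

lemma card_GK : Fintype.card GK = 13 := rfl

lemma size_shiftG (n : ℕ) : (shiftG n).size ≤ 26 * n + 52 := by
  have hb : (shiftG n).size ≤ (Finset.univ : Finset (GVT n)).card • 2 := by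
    unfold SLP2.size
    apply Finset.sum_le_card_nsmul
    intro x _
    rcases h : (shiftG n).rhs x with a | ⟨Y, Z⟩ | ⟨Y, Z⟩ <;> simp [h]
  have hc : ((Finset.univ : Finset (GVT n)).card : ℕ) = 13 * (n + 2) := by
    rw [Finset.card_univ]
    show Fintype.card (GK × Fin (n + 2)) = _
    rw [Fintype.card_prod, card_GK, Fintype.card_fin]
  rw [hc, smul_eq_mul] at hb
  omega
/-- There is an absolute constant `c > 0` such that for every
`n ≥ 1` and `N = 2^n`, there is a 2D SLP of size at most `c * n` deriving the
2D string `ShiftBin_N`. -/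
theorem shiftbin_small_slp :
    ∃ c : ℕ, 0 < c ∧ ∀ n : ℕ, 1 ≤ n →
      ∃ G : SLP2 Alpha3, G.WF ∧ G.exp = shiftBinStr n ∧ G.size ≤ c * n := by
  refine ⟨78, by norm_num, fun n hn => ⟨shiftG n, wf_shiftG n, exp_shiftG n, ?_⟩⟩
  have := size_shiftG n
  omega
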